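/- Let G be a finite connected graph. Then CBP(G) is Hirsch: its graph-diameter is at most k − d, where k is the number of facets of CBP(G) and d = dim CBP(G). -/

import Mathlib

open Set
set_option linter.unusedSectionVars false
set_option maxHeartbeats 1000000

noncomputable section

namespace ConnectedBlocksPaper

variable {V : Type} [Fintype V] [DecidableEq V]

/-- A subgraph is 2-connected: at least 3 vertices and removing any vertex keeps it connected. -/
def IsTwoConnectedSub (G : SimpleGraph V) (H : G.Subgraph) : Prop :=
  3 ≤ H.verts.ncard ∧ ∀ v ∈ H.verts, (H.deleteVerts {v}).Connected

/-- A block of `G`: a maximal 2-connected subgraph, or a bridge together with its two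
incident vertices. -/
def IsBlock (G : SimpleGraph V) (B : G.Subgraph) : Prop :=
  (IsTwoConnectedSub G B ∧ ∀ B' : G.Subgraph, IsTwoConnectedSub G B' → B ≤ B' → B' = B)
  ∨ (∃ (u v : V) (h : G.Adj u v), G.IsBridge s(u, v) ∧ B = G.subgraphOfAdj h)

/-- The set `𝓑` of blocks of `G`, as a type. -/
abbrev Block (G : SimpleGraph V) := {B : G.Subgraph // IsBlock G B}

/-- The subgraph `G[𝓐]` induced by a set of blocks. -/
def blockUnion (G : SimpleGraph V) (𝓐 : Set (Block G)) : G.Subgraph :=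
  ⨆ B ∈ 𝓐, (B : G.Subgraph)

/-- `G[𝓐]` is connected (the empty set of blocks counts as connected). -/
def ConnBlocks (G : SimpleGraph V) (𝓐 : Set (Block G)) : Prop :=
  𝓐 = ∅ ∨ (blockUnion G 𝓐).Connected

/-- The incidence vector `χ^𝓐 ∈ {0,1}^𝓑` of a set of blocks `𝓐 ⊆ 𝓑`. -/
def incVec (G : SimpleGraph V) (𝓐 : Set (Block G)) : Block G → ℝ :=
  Set.indicator 𝓐 1

/-- The connected blocks polytope `CBP(G) ⊆ ℝ^𝓑`. -/
def CBP (G : SimpleGraph V) : Set (Block G → ℝ) :=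
  convexHull ℝ {x | ∃ 𝓐 : Set (Block G), ConnBlocks G 𝓐 ∧ x = incVec G 𝓐}

/-- `F` is a face of the convex set `P`. -/
def IsFaceOf {E : Type*} [AddCommGroup E] [Module ℝ E] (P F : Set E) : Prop :=
  F ⊆ P ∧ Convex ℝ F ∧
    ∀ x ∈ P, ∀ y ∈ P, ∀ t : ℝ, 0 < t → t < 1 →
      t • x + (1 - t) • y ∈ F → x ∈ F ∧ y ∈ F

/-- The dimension of a polytope: the dimension of its affine hull. -/
def polyDim {E : Type*} [AddCommGroup E] [Module ℝ E] (P : Set E) : ℕ :=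
  Module.finrank ℝ (affineSpan ℝ P).direction

/-- A facet is a face of dimension `dim P - 1`. -/
def IsFacetOf {E : Type*} [AddCommGroup E] [Module ℝ E] (P F : Set E) : Prop :=
  IsFaceOf P F ∧ polyDim F = polyDim P - 1

/-- `v` is a cut vertex of `G`: deleting `v` from the connected graph `G` leaves more than
one component. -/
def IsCutVertex (G : SimpleGraph V) (v : V) : Prop :=
  ¬ (G.induce ({v}ᶜ : Set V)).Preconnected

/-- `𝓑⟨𝓐⟩`: the smallest set of blocks inducing a connected subgraph and containing `𝓐`. -/
def blockClosure (G : SimpleGraph V) (𝓐 : Set (Block G)) : Set (Block G) :=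
  ⋂₀ {𝓒 : Set (Block G) | 𝓐 ⊆ 𝓒 ∧ ConnBlocks G 𝓒}

/-- An independent set of blocks: no two blocks share a common vertex. -/
def IndepBlocks (G : SimpleGraph V) (𝓘 : Set (Block G)) : Prop :=
  ∀ B₁ ∈ 𝓘, ∀ B₂ ∈ 𝓘, B₁ ≠ B₂ →
    ((B₁ : G.Subgraph).verts ∩ (B₂ : G.Subgraph).verts) = ∅

/-- `(𝓘, α)` is an independent blocks inequality. -/
def IsIBI (G : SimpleGraph V) (𝓘 : Set (Block G)) (α : Block G → ℤ) : Prop :=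
  IndepBlocks G 𝓘 ∧
  (∀ B, B ∉ blockClosure G 𝓘 → α B = 0) ∧
  (∀ B ∈ 𝓘, α B = 1) ∧
  (∀ B ∈ blockClosure G 𝓘 \ 𝓘, α B ≤ 0) ∧
  (∑ᶠ B ∈ blockClosure G 𝓘 \ 𝓘, α B = -((𝓘.ncard : ℤ) - 1)) ∧
  (∀ I ⊆ 𝓘, ∑ᶠ B ∈ blockClosure G I \ 𝓘, α B ≤ -((I.ncard : ℤ) - 1))

/-- `𝓑[H]`: the set of blocks (of `G`) of the subgraph `H`. -/
def blocksOf (G : SimpleGraph V) (H : G.Subgraph) : Set (Block G) :=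
  {B : Block G | (B : G.Subgraph) ≤ H}

/-- `𝒦_v`: the components of `G - v` with `v` (and its incident edges) added back. -/
def Kv (G : SimpleGraph V) (v : V) : Set G.Subgraph :=
  {H | ∃ C : (G.induce ({v}ᶜ : Set V)).ConnectedComponent,
        H = (⊤ : G.Subgraph).induce (Subtype.val '' C.supp ∪ {v})}

/-- A polytope is simple if every vertex lies in exactly `dim P` facets. -/
def IsSimplePolytope {E : Type*} [AddCommGroup E] [Module ℝ E] (P : Set E) : Prop :=
  ∀ x ∈ P.extremePoints ℝ, {F : Set E | IsFacetOf P F ∧ x ∈ F}.ncard = polyDim P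

/-- A simplex: the convex hull of an affinely independent finite set. -/
def IsSimplex {E : Type*} [AddCommGroup E] [Module ℝ E] (F : Set E) : Prop :=
  ∃ s : Finset E, AffineIndependent ℝ ((↑) : s → E) ∧ F = convexHull ℝ (s : Set E)

/-- A polytope is simplicial if every facet is a simplex. -/
def IsSimplicialPolytope {E : Type*} [AddCommGroup E] [Module ℝ E] (P : Set E) : Prop :=
  ∀ F : Set E, IsFacetOf P F → IsSimplex F

/-- The graph of a polytope: extreme points, adjacent when they span a 1-dimensional face. -/
def polyGraph {E : Type*} [AddCommGroup E] [Module ℝ E] (P : Set E) : SimpleGraph E where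
  Adj x y := x ≠ y ∧ x ∈ P.extremePoints ℝ ∧ y ∈ P.extremePoints ℝ ∧
    IsFaceOf P (segment ℝ x y) ∧ polyDim (segment ℝ x y) = 1
  symm := by
    constructor
    rintro x y ⟨hxy, hx, hy, hF, hd⟩
    exact ⟨hxy.symm, hy, hx, by rwa [segment_symm], by rwa [segment_symm]⟩
  loopless := by constructor; rintro x ⟨h, -⟩; exact h rfl

/-! ### Auxiliary development -/

instance instSubgraphFinite (G : SimpleGraph V) : Finite (G.Subgraph) :=
  Finite.of_injective (fun H => (H.verts, H.Adj)) (by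
    rintro H K h
    simp only [Prod.mk.injEq] at h
    exact SimpleGraph.Subgraph.ext h.1 h.2)

noncomputable instance instBlockFintype (G : SimpleGraph V) : Fintype (Block G) :=
  Fintype.ofFinite _

noncomputable instance instBlockDecEq (G : SimpleGraph V) : DecidableEq (Block G) :=
  Classical.decEq _

variable {G : SimpleGraph V}

/-- A 2-connected subgraph is connected. -/
lemma IsTwoConnectedSub.connected {H : G.Subgraph} (h : IsTwoConnectedSub G H) :
    H.Connected := by
  obtain ⟨h3, hdel⟩ := h
  have hfin : H.verts.Finite := Set.toFinite _
  have hne : H.verts.Nonempty := by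
    rw [← Set.ncard_pos hfin]; omega
  obtain ⟨v, hv⟩ := hne
  have h2 : (H.verts \ {v}).Nonempty := by
    rw [← Set.ncard_pos hfin.diff]
    have := Set.ncard_diff_singleton_add_one hv hfin
    omega
  obtain ⟨u, hu⟩ := h2
  have huv : (H.verts \ {v} ∩ (H.verts \ {u})).Nonempty := by
    rw [← Set.ncard_pos (hfin.diff.inter_of_left _)]
    have e1 : H.verts \ {v} ∩ (H.verts \ {u}) = H.verts \ {v, u} := by
      ext x; simp [Set.mem_diff]; tauto
    rw [e1]
    have h2 : ({v, u} : Set V).ncard ≤ 2 := by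
      apply le_trans (Set.ncard_insert_le _ _); simp [Set.ncard_singleton]
    have := Set.ncard_diff_add_ncard_of_subset (by
      rintro x (rfl|rfl); exact hv; exact hu.1 : ({v, u} : Set V) ⊆ H.verts) hfin
    omega
  have hu' : u ∈ H.verts := hu.1
  have hcv := hdel v hv
  have hcu := hdel u hu'
  have hsup := SimpleGraph.Subgraph.connected_sup hcv.preconnected hcu.preconnected (by
    obtain ⟨w, hw⟩ := huv
    refine ⟨w, ?_⟩
    simp only [SimpleGraph.Subgraph.verts_inf, SimpleGraph.Subgraph.deleteVerts_verts]
    exact ⟨hw.1, hw.2⟩)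
  refine hsup.mono
    (sup_le SimpleGraph.Subgraph.deleteVerts_le SimpleGraph.Subgraph.deleteVerts_le) ?_
  simp only [SimpleGraph.Subgraph.verts_sup, SimpleGraph.Subgraph.deleteVerts_verts]
  ext x
  simp only [Set.mem_union, Set.mem_diff, Set.mem_singleton_iff]
  constructor
  · rintro (h|h) <;> exact h.1
  · intro hx
    by_cases hxv : x = v
    · subst hxv; right; exact ⟨hx, fun h => hu.2 (h ▸ rfl)⟩
    · left; exact ⟨hx, hxv⟩

/-- every block is a connected subgraph -/
lemma Block.connected (B : Block G) : (B : G.Subgraph).Connected := by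
  obtain ⟨B, hB | ⟨u, v, h, _, rfl⟩⟩ := B
  · exact hB.1.connected
  · exact SimpleGraph.Subgraph.subgraphOfAdj_connected h

lemma Block.verts_nonempty (B : Block G) : (B : G.Subgraph).verts.Nonempty :=
  B.connected.nonempty

lemma blockUnion_adj {𝓐 : Set (Block G)} {a b : V} :
    (blockUnion G 𝓐).Adj a b ↔ ∃ X ∈ 𝓐, (X : G.Subgraph).Adj a b := by
  simp [blockUnion, SimpleGraph.Subgraph.iSup_adj]

lemma blockUnion_verts {𝓐 : Set (Block G)} :
    (blockUnion G 𝓐).verts = ⋃ X ∈ 𝓐, (X : G.Subgraph).verts := by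
  simp [blockUnion, SimpleGraph.Subgraph.verts_iSup]

lemma le_blockUnion {𝓐 : Set (Block G)} {X : Block G} (hX : X ∈ 𝓐) :
    (X : G.Subgraph) ≤ blockUnion G 𝓐 := le_biSup _ hX

lemma blockUnion_singleton {X : Block G} : blockUnion G {X} = (X : G.Subgraph) := by
  simp [blockUnion]

lemma connBlocks_singleton (X : Block G) : ConnBlocks G {X} := by
  right; rw [blockUnion_singleton]; exact X.connected

lemma connBlocks_empty : ConnBlocks G (∅ : Set (Block G)) := Or.inl rfl

/-! ### The intersection graph of a family of blocks -/

/-- The intersection graph of a family of blocks. -/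
def auxGraph (𝓢 : Set (Block G)) : SimpleGraph (Block G) where
  Adj X Y := X ≠ Y ∧ X ∈ 𝓢 ∧ Y ∈ 𝓢 ∧
    ((X : G.Subgraph).verts ∩ (Y : G.Subgraph).verts).Nonempty
  symm := by
    constructor
    rintro X Y ⟨h1, h2, h3, h4⟩
    exact ⟨h1.symm, h3, h2, by rwa [Set.inter_comm]⟩
  loopless := ⟨fun X h => h.1 rfl⟩

lemma auxGraph_support_subset {𝓢 : Set (Block G)} {a b : Block G}
    (w : (auxGraph 𝓢).Walk a b) : ∀ x ∈ w.support, x = a ∨ x ∈ 𝓢 := by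
  induction w with
  | nil => intro x hx; left; simpa using hx
  | cons h p ih =>
    intro x hx
    rw [SimpleGraph.Walk.support_cons] at hx
    rcases List.mem_cons.1 hx with rfl | hx
    · left; rfl
    · rcases ih x hx with rfl | hx
      · right; exact h.2.2.1
      · right; exact hx

lemma auxGraph_mono {𝓢 𝓣 : Set (Block G)} (h : 𝓢 ⊆ 𝓣) : auxGraph 𝓢 ≤ auxGraph 𝓣 := by
  rintro X Y ⟨h1, h2, h3, h4⟩
  exact ⟨h1, h h2, h h3, h4⟩

/-- If the intersection graph chains everybody together, the union is connected. -/
lemma blockUnion_connected_of_aux {𝓢 : Set (Block G)} (hne : 𝓢.Nonempty)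
    (hreach : ∀ X ∈ 𝓢, ∀ Y ∈ 𝓢, (auxGraph 𝓢).Reachable X Y) :
    (blockUnion G 𝓢).Connected := by
  have key : ∀ {X Y : Block G} (_ : (auxGraph 𝓢).Walk X Y), X ∈ 𝓢 →
      ∃ U : G.Subgraph, U.Connected ∧ U ≤ blockUnion G 𝓢 ∧
        (X : G.Subgraph).verts ⊆ U.verts ∧ (Y : G.Subgraph).verts ⊆ U.verts := by
    intro X Y w
    induction w with
    | nil =>
      intro hX
      exact ⟨_, Block.connected _, le_blockUnion hX, subset_rfl, subset_rfl⟩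
    | @cons A Z C h p ih =>
      intro hX
      obtain ⟨U, hUc, hUle, hZU, hCU⟩ := ih h.2.2.1
      refine ⟨(A : G.Subgraph) ⊔ U, ?_, sup_le (le_blockUnion h.2.1) hUle,
        fun v hv => Or.inl hv, fun v hv => Or.inr (hCU hv)⟩
      refine SimpleGraph.Subgraph.connected_sup (Block.connected A).preconnected hUc.preconnected ?_
      obtain ⟨v, hv⟩ := h.2.2.2
      exact ⟨v, hv.1, hZU hv.2⟩
  rw [SimpleGraph.Subgraph.connected_iff]
  refine ⟨⟨?_⟩, ?_⟩
  · rintro ⟨u, hu⟩ ⟨v, hv⟩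
    rw [blockUnion_verts] at hu hv
    simp only [Set.mem_iUnion] at hu hv
    obtain ⟨X, hX, hu⟩ := hu
    obtain ⟨Y, hY, hv⟩ := hv
    obtain ⟨w⟩ := hreach X hX Y hY
    obtain ⟨U, hUc, hUle, hXU, hYU⟩ := key w hX
    exact SimpleGraph.Reachable.map (SimpleGraph.Subgraph.inclusion hUle)
      (hUc ⟨u, hXU hu⟩ ⟨v, hYU hv⟩)
  · obtain ⟨X, hX⟩ := hne
    obtain ⟨v, hv⟩ := X.verts_nonempty
    exact ⟨v, by rw [blockUnion_verts]; exact Set.mem_iUnion₂.2 ⟨X, hX, hv⟩⟩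

/-- Conversely, if the union is connected then the intersection graph is connected. -/
lemma aux_reachable_of_connected {𝓢 : Set (Block G)}
    (hc : (blockUnion G 𝓢).Connected) :
    ∀ X ∈ 𝓢, ∀ Y ∈ 𝓢, (auxGraph 𝓢).Reachable X Y := by
  have key : ∀ (a b : (blockUnion G 𝓢).verts) (w : (blockUnion G 𝓢).coe.Walk a b)
      (X Y : Block G), X ∈ 𝓢 → Y ∈ 𝓢 → (a : V) ∈ (X : G.Subgraph).verts →
      (b : V) ∈ (Y : G.Subgraph).verts → (auxGraph 𝓢).Reachable X Y := by
    intro a b w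
    induction w with
    | nil =>
      intro X Y hX hY ha hb
      by_cases hXY : X = Y
      · subst hXY; rfl
      · exact SimpleGraph.Adj.reachable ⟨hXY, hX, hY, ⟨_, ha, hb⟩⟩
    | @cons a c b h p ih =>
      intro X Y hX hY ha hb
      have hadj : (blockUnion G 𝓢).Adj a c := by
        simpa using h
      obtain ⟨Z, hZ, hZadj⟩ := blockUnion_adj.1 hadj
      have h1 : (a : V) ∈ (Z : G.Subgraph).verts := hZadj.fst_mem
      have h2 : (c : V) ∈ (Z : G.Subgraph).verts := hZadj.snd_mem
      have hXZ : (auxGraph 𝓢).Reachable X Z := by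
        by_cases hXY : X = Z
        · subst hXY; rfl
        · exact SimpleGraph.Adj.reachable ⟨hXY, hX, hZ, ⟨_, ha, h1⟩⟩
      exact hXZ.trans (ih Z Y hZ hY h2 hb)
  intro X hX Y hY
  obtain ⟨u, hu⟩ := X.verts_nonempty
  obtain ⟨v, hv⟩ := Y.verts_nonempty
  have hu' : u ∈ (blockUnion G 𝓢).verts := by
    rw [blockUnion_verts]; exact Set.mem_iUnion₂.2 ⟨X, hX, hu⟩
  have hv' : v ∈ (blockUnion G 𝓢).verts := by
    rw [blockUnion_verts]; exact Set.mem_iUnion₂.2 ⟨Y, hY, hv⟩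
  obtain ⟨w⟩ := hc.preconnected ⟨u, hu'⟩ ⟨v, hv'⟩
  exact key _ _ w X Y hX hY hu hv

/-! ### The peeling lemma -/

lemma connBlocks_connected {𝓐 : Set (Block G)} (h : ConnBlocks G 𝓐) (hne : 𝓐.Nonempty) :
    (blockUnion G 𝓐).Connected := by
  rcases h with h | h
  · exact absurd h hne.ne_empty
  · exact h

/-- Peeling lemma: from a connected family one can remove a block outside a prescribed
connected subfamily, keeping the union connected. -/
lemma exists_peel {𝓐 𝓓 : Set (Block G)} (hA : ConnBlocks G 𝓐) (hD : ConnBlocks G 𝓓)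
    (hsub : 𝓓 ⊆ 𝓐) (hne : 𝓓 ≠ 𝓐) :
    ∃ B ∈ 𝓐 \ 𝓓, ConnBlocks G (𝓐 \ {B}) := by
  classical
  have hTne : (𝓐 \ 𝓓).Nonempty := by
    rcases Set.eq_empty_or_nonempty (𝓐 \ 𝓓) with h | h
    · exact absurd (Set.eq_of_subset_of_subset hsub
        (fun x hx => by_contra fun hx' => (Set.eq_empty_iff_forall_notMem.1 h x ⟨hx, hx'⟩))) hne
    · exact h
  have hAne : 𝓐.Nonempty := hTne.mono Set.diff_subset
  have hAc : (blockUnion G 𝓐).Connected := connBlocks_connected hA hAne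
  -- singleton case
  by_cases hsing : ∃ B, 𝓐 = {B}
  · obtain ⟨B, rfl⟩ := hsing
    have hD0 : 𝓓 = ∅ := by
      rcases Set.eq_empty_or_nonempty 𝓓 with h | h
      · exact h
      · obtain ⟨x, hx⟩ := h
        have := hsub hx
        simp only [Set.mem_singleton_iff] at this
        subst this
        exact absurd (Set.eq_of_subset_of_subset hsub (fun y hy => by
          simp only [Set.mem_singleton_iff] at hy; subst hy; exact hx)) hne
    refine ⟨B, ⟨rfl, by simp [hD0]⟩, ?_⟩
    left; simp
  -- main case
  have hreach := aux_reachable_of_connected hAc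
  -- base point
  obtain ⟨u, hu⟩ : ∃ u, (𝓓.Nonempty → u ∈ 𝓓) ∧ u ∈ 𝓐 := by
    rcases Set.eq_empty_or_nonempty 𝓓 with h | h
    · obtain ⟨a, ha⟩ := hAne
      exact ⟨a, fun h' => absurd h (Set.nonempty_iff_ne_empty.1 h'), ha⟩
    · obtain ⟨d, hd⟩ := h
      exact ⟨d, fun _ => hd, hsub hd⟩
  obtain ⟨B, hBT, hBmax⟩ := Set.Finite.exists_maximalFor
    (fun X => (auxGraph 𝓐).dist u X) (𝓐 \ 𝓓) (Set.toFinite _) hTne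
  have hmax : ∀ Y ∈ 𝓐 \ 𝓓, (auxGraph 𝓐).dist u Y ≤ (auxGraph 𝓐).dist u B := by
    intro Y hY
    rcases le_total ((auxGraph 𝓐).dist u Y) ((auxGraph 𝓐).dist u B) with h | h
    · exact h
    · exact (hBmax hY h).ge
  have hBu : B ≠ u := by
    rintro rfl
    rcases Set.eq_empty_or_nonempty 𝓓 with hD0 | hDne
    · -- all of 𝓐 is at distance ≤ 0, hence 𝓐 = {B}
      refine hsing ⟨B, Set.eq_of_subset_of_subset (fun Y hY => ?_) (by simpa using hBT.1)⟩
      have h1 : (auxGraph 𝓐).dist B Y ≤ (auxGraph 𝓐).dist B B :=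
        hmax Y (by rw [hD0]; simpa using hY)
      rw [SimpleGraph.dist_self] at h1
      obtain ⟨w, hw⟩ := (hreach B hBT.1 Y hY).exists_walk_length_eq_dist
      have : w.length = 0 := by omega
      simpa using (SimpleGraph.Walk.eq_of_length_eq_zero this).symm
    · exact hBT.2 (hu.1 hDne)
  -- walks from u avoiding B
  have havoid : ∀ Y ∈ 𝓐 \ {B}, ∃ w : (auxGraph 𝓐).Walk u Y, B ∉ w.support := by
    intro Y hY
    by_cases hYD : Y ∈ 𝓓
    · -- go inside 𝓓
      have hDne : 𝓓.Nonempty := ⟨Y, hYD⟩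
      have hDc : (blockUnion G 𝓓).Connected := connBlocks_connected hD hDne
      obtain ⟨w⟩ := aux_reachable_of_connected hDc u (hu.1 hDne) Y hYD
      refine ⟨w.mapLe (auxGraph_mono hsub), ?_⟩
      intro hmem
      have hsupp_eq : (w.mapLe (auxGraph_mono hsub)).support = w.support := by
        rw [SimpleGraph.Walk.mapLe, SimpleGraph.Walk.support_map]
        exact List.map_id _
      rw [hsupp_eq] at hmem
      rcases auxGraph_support_subset w B hmem with rfl | hB𝓓
      · exact hBu rfl
      · exact hBT.2 hB𝓓
    · -- Y is in 𝓐 \ 𝓓 : use a geodesic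
      obtain ⟨w, hw⟩ := (hreach u hu.2 Y hY.1).exists_walk_length_eq_dist
      refine ⟨w, fun hmem => ?_⟩
      have hYB : Y ≠ B := by simpa using hY.2
      have h1 := SimpleGraph.Walk.take_spec w hmem
      have hlen : (w.takeUntil B hmem).length + (w.dropUntil B hmem).length = w.length := by
        conv_rhs => rw [← h1]
        rw [SimpleGraph.Walk.length_append]
      have h2 : (auxGraph 𝓐).dist u B ≤ (w.takeUntil B hmem).length :=
        SimpleGraph.dist_le _
      have h3 : (w.dropUntil B hmem).length ≠ 0 := by
        intro h0
        exact hYB.symm (SimpleGraph.Walk.eq_of_length_eq_zero h0)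
      have h4 := hmax Y ⟨hY.1, hYD⟩
      omega
  -- conclude
  refine ⟨B, hBT, ?_⟩
  rcases Set.eq_empty_or_nonempty (𝓐 \ {B}) with h0 | h0
  · left; exact h0
  · right
    apply blockUnion_connected_of_aux h0
    intro X hX Y hY
    obtain ⟨wX, hwX⟩ := havoid X hX
    obtain ⟨wY, hwY⟩ := havoid Y hY
    set w := wX.reverse.append wY with hwdef
    have hsupp : B ∉ w.support := by
      rw [hwdef, SimpleGraph.Walk.support_append]
      intro hmem
      rcases List.mem_append.1 hmem with h | h
      · rw [SimpleGraph.Walk.support_reverse] at h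
        exact hwX (List.mem_reverse.1 h)
      · exact hwY (List.tail_subset _ h)
    -- transfer the walk into the smaller intersection graph
    have hedges : ∀ e ∈ w.edges, e ∈ (auxGraph (𝓐 \ {B})).edgeSet := by
      intro e he
      induction e with
      | h x y =>
        have hadj : (auxGraph 𝓐).Adj x y := w.adj_of_mem_edges he
        have hx : x ∈ w.support := SimpleGraph.Walk.fst_mem_support_of_mem_edges w he
        have hy : y ∈ w.support := SimpleGraph.Walk.snd_mem_support_of_mem_edges w he
        have hxB : x ≠ B := fun h => hsupp (h ▸ hx)
        have hyB : y ≠ B := fun h => hsupp (h ▸ hy)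
        exact ⟨hadj.1, ⟨hadj.2.1, hxB⟩, ⟨hadj.2.2.1, hyB⟩, hadj.2.2.2⟩
    exact ⟨w.transfer _ hedges⟩


/-! ### Every edge lies in a block; the set of all blocks is connected -/

lemma Subgraph.exists_adj_of_conn {H : G.Subgraph} (hc : H.Connected) {a b : V}
    (ha : a ∈ H.verts) (hb : b ∈ H.verts) (hab : a ≠ b) : ∃ x y, H.Adj x y := by
  obtain ⟨w⟩ := hc ⟨a, ha⟩ ⟨b, hb⟩
  cases w with
  | nil => exact absurd rfl hab
  | cons h p => exact ⟨a, _, by simpa using h⟩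

/-- The subgraph of a cycle is 2-connected. -/
lemma isTwoConnectedSub_of_cycle {w : V} {c : G.Walk w w} (hc : c.IsCycle) :
    IsTwoConnectedSub G c.toSubgraph := by
  classical
  constructor
  · -- at least three vertices
    have h1 : c.support.tail.Nodup := hc.2
    have h2 : 3 ≤ c.support.tail.length := by
      have := hc.three_le_length
      have := c.length_support
      simp only [List.length_tail, this]
      omega
    have hsub : {x | x ∈ c.support.tail} ⊆ c.toSubgraph.verts := by
      intro x hx
      rw [SimpleGraph.Walk.mem_verts_toSubgraph]
      exact List.tail_subset _ hx
    have e1 : {x | x ∈ c.support.tail} = (c.support.tail.toFinset : Set V) := by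
      ext x; simp
    have e2 : ({x | x ∈ c.support.tail} : Set V).ncard = c.support.tail.length := by
      rw [e1, Set.ncard_coe_finset, List.toFinset_card_of_nodup h1]
    calc 3 ≤ ({x | x ∈ c.support.tail} : Set V).ncard := by omega
    _ ≤ c.toSubgraph.verts.ncard := Set.ncard_le_ncard hsub (Set.toFinite _)
  · -- deleting any vertex keeps it connected
    intro x hx
    rw [SimpleGraph.Walk.mem_verts_toSubgraph] at hx
    suffices key : ∀ (c' : G.Walk x x), c'.IsCycle →
        (c'.toSubgraph.deleteVerts {x}).Connected by
      have := key (c.rotate x hx) (hc.rotate hx)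
      rwa [SimpleGraph.Walk.toSubgraph_rotate] at this
    intro c' hc'
    cases c' with
    | nil =>
      exfalso
      have := hc'.three_le_length
      simp at this
    | @cons _ z _ h q =>
      -- q : Walk z x with nodup support
      have hnodup : q.support.Nodup := by
        have := hc'.2
        rw [SimpleGraph.Walk.support_cons] at this
        simpa using this
      have hqlen : 2 ≤ q.length := by
        have h3 := hc'.three_le_length
        simp only [SimpleGraph.Walk.length_cons] at h3
        omega
      -- decompose q from the end
      obtain ⟨y, r, h₂, hq2⟩ : ∃ (y : V) (r : G.Walk z y) (h₂ : G.Adj y x),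
          q = r.concat h₂ := by
        cases hq3 : q with
        | nil => rw [hq3] at hqlen; simp at hqlen
        | cons h₃ q₃ =>
          obtain ⟨y, r, h₂, he⟩ := SimpleGraph.Walk.exists_cons_eq_concat h₃ q₃
          exact ⟨y, r, h₂, he⟩
      have hsupq : q.support = r.support.concat x := by
        rw [hq2, SimpleGraph.Walk.support_concat, List.concat_eq_append]
      have hxr : x ∉ r.support := by
        intro hmem
        have : ¬ q.support.Nodup := by
          rw [hsupq]
          intro hnd
          rw [List.concat_eq_append] at hnd
          have := List.disjoint_of_nodup_append hnd
          exact this hmem (by simp)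
        exact this hnodup
      -- r.toSubgraph is the candidate spanning connected subgraph
      have hrle : r.toSubgraph ≤ (SimpleGraph.Walk.cons h q).toSubgraph := by
        calc r.toSubgraph ≤ q.toSubgraph := by
              rw [hq2, SimpleGraph.Walk.concat_eq_append,
                SimpleGraph.Walk.toSubgraph_append]
              exact le_sup_left
        _ ≤ (SimpleGraph.Walk.cons h q).toSubgraph := by
              simp only [SimpleGraph.Walk.toSubgraph]
              exact le_sup_right
      have hverts : r.toSubgraph.verts =
          ((SimpleGraph.Walk.cons h q).toSubgraph.deleteVerts {x}).verts := by
        rw [SimpleGraph.Subgraph.deleteVerts_verts]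
        ext a
        simp only [SimpleGraph.Walk.verts_toSubgraph, Set.mem_setOf_eq, Set.mem_diff,
          Set.mem_singleton_iff]
        constructor
        · intro ha
          refine ⟨?_, fun h' => hxr (h' ▸ ha)⟩
          rw [SimpleGraph.Walk.support_cons]
          right
          rw [hsupq, List.concat_eq_append]
          exact List.mem_append.2 (Or.inl ha)
        · rintro ⟨ha, hax⟩
          rw [SimpleGraph.Walk.support_cons] at ha
          rcases List.mem_cons.1 ha with rfl | ha
          · exact absurd rfl hax
          · rw [hsupq, List.concat_eq_append] at ha
            rcases List.mem_append.1 ha with ha | ha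
            · exact ha
            · simp only [List.mem_singleton] at ha
              exact absurd ha hax
      apply (r.toSubgraph_connected).mono _ hverts
      constructor
      · rw [hverts]
      · intro a b hab
        have hamem : a ∈ r.toSubgraph.verts := hab.fst_mem
        have hbmem : b ∈ r.toSubgraph.verts := hab.snd_mem
        rw [SimpleGraph.Walk.mem_verts_toSubgraph] at hamem hbmem
        refine SimpleGraph.Subgraph.deleteVerts_adj.2 ?_
        exact ⟨(hrle.1 hab.fst_mem), fun h' => hxr ((Set.mem_singleton_iff.1 h') ▸ hamem),
          (hrle.1 hab.snd_mem), fun h' => hxr ((Set.mem_singleton_iff.1 h') ▸ hbmem),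
          hrle.2 hab⟩

/-- Every edge of `G` lies in a block. -/
lemma exists_block_adj {u v : V} (h : G.Adj u v) :
    ∃ B : Block G, (B : G.Subgraph).Adj u v := by
  classical
  by_cases hbr : G.IsBridge s(u, v)
  · exact ⟨⟨G.subgraphOfAdj h, Or.inr ⟨u, v, h, hbr, rfl⟩⟩, by simp⟩
  · -- lies on a cycle
    rw [SimpleGraph.isBridge_iff_adj_and_forall_cycle_notMem (he := h)] at hbr
    push_neg at hbr
    obtain ⟨w, c, hc, hmem⟩ := hbr
    have h2c := isTwoConnectedSub_of_cycle hc
    -- extend to a maximal 2-connected subgraph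
    obtain ⟨B, hBmem, hBmax⟩ := Set.Finite.exists_maximalFor (id : G.Subgraph → G.Subgraph)
      {B' | c.toSubgraph ≤ B' ∧ IsTwoConnectedSub G B'} (Set.toFinite _)
      ⟨c.toSubgraph, le_rfl, h2c⟩
    refine ⟨⟨B, Or.inl ⟨hBmem.2, fun B' h2 hle => ?_⟩⟩, ?_⟩
    · exact le_antisymm (hBmax ⟨le_trans hBmem.1 hle, h2⟩ hle) hle
    · apply hBmem.1.2
      rw [← SimpleGraph.Subgraph.mem_edgeSet, SimpleGraph.Walk.mem_edges_toSubgraph]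
      exact hmem

/-- When there is at least one block, the family of all blocks is connected. -/
lemma connBlocks_univ (hG : G.Connected) [hne : Nonempty (Block G)] :
    ConnBlocks G (Set.univ : Set (Block G)) := by
  right
  have hBU : blockUnion G Set.univ = ⊤ := by
    -- first, find some edge of G
    obtain ⟨B0⟩ := hne
    have hedge : ∃ x y, G.Adj x y := by
      obtain ⟨B0', hB0⟩ := B0
      rcases hB0 with h2 | ⟨a, b, hab, _, _⟩
      · have h3 := h2.1.1
        have hfin : B0'.verts.Finite := Set.toFinite _
        have h4 : 1 < B0'.verts.ncard := by omega
        obtain ⟨a, b, ha, hb, hab⟩ := (Set.one_lt_ncard_iff hfin).1 h4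
        obtain ⟨x, y, hxy⟩ := Subgraph.exists_adj_of_conn h2.1.connected ha hb hab
        exact ⟨x, y, B0'.adj_sub hxy⟩
      · exact ⟨a, b, hab⟩
    obtain ⟨x0, y0, hx0y0⟩ := hedge
    apply SimpleGraph.Subgraph.ext
    · -- verts
      apply Set.eq_of_subset_of_subset (fun _ _ => trivial)
      intro v _
      have hvedge : ∃ z, G.Adj v z := by
        by_cases hv : v = x0
        · exact ⟨y0, hv ▸ hx0y0⟩
        · obtain ⟨w⟩ := hG.preconnected v x0
          cases w with
          | nil => exact absurd rfl hv
          | cons h p => exact ⟨_, h⟩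
      obtain ⟨z, hz⟩ := hvedge
      obtain ⟨B, hB⟩ := exists_block_adj hz
      rw [blockUnion_verts]
      exact Set.mem_iUnion₂.2 ⟨B, trivial, hB.fst_mem⟩
    · -- adj
      ext a b
      rw [blockUnion_adj]
      constructor
      · rintro ⟨X, _, hX⟩
        exact (X : G.Subgraph).adj_sub hX
      · intro hab
        obtain ⟨B, hB⟩ := exists_block_adj hab
        exact ⟨B, trivial, hB⟩
  rw [hBU]
  rw [SimpleGraph.Subgraph.connected_iff_forall_exists_walk_subgraph]
  haveI := hG.nonempty
  refine ⟨by simpa using Set.univ_nonempty, ?_⟩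
  intro u v _ _
  obtain ⟨p⟩ := hG.preconnected u v
  exact ⟨p, le_top⟩

/-- For distinct blocks `A B` there is a connected family containing both such that
removing `A` keeps it connected. -/
lemma exists_conn_pair (hG : G.Connected) {A B : Block G} (hAB : A ≠ B) :
    ∃ 𝓒 : Set (Block G), ConnBlocks G 𝓒 ∧ A ∈ 𝓒 ∧ B ∈ 𝓒 ∧
      ConnBlocks G (𝓒 \ {A}) ∧ B ∈ 𝓒 \ {A} := by
  classical
  haveI : Nonempty (Block G) := ⟨A⟩
  obtain ⟨𝓒, h𝓒, hmin⟩ := Set.Finite.exists_minimalFor (id : Set (Block G) → Set (Block G))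
    {𝓒 | ConnBlocks G 𝓒 ∧ A ∈ 𝓒 ∧ B ∈ 𝓒} (Set.toFinite _)
    ⟨Set.univ, connBlocks_univ hG, trivial, trivial⟩
  obtain ⟨hconn, hA, hB⟩ := h𝓒
  have hsub : ({B} : Set (Block G)) ⊆ 𝓒 := by simpa using hB
  have hne : ({B} : Set (Block G)) ≠ 𝓒 := by
    intro h
    rw [← h] at hA
    exact hAB (by simpa using hA)
  obtain ⟨C, hCT, hCconn⟩ := exists_peel hconn (connBlocks_singleton B) hsub hne
  have hCB : C ≠ B := by simpa using hCT.2
  by_cases hAC : A = C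
  · subst hAC
    exact ⟨𝓒, hconn, hA, hB, hCconn, ⟨hB, fun h => hCB (Set.mem_singleton_iff.1 h).symm⟩⟩
  · exfalso
    have hmem : 𝓒 \ {C} ∈ {𝓒 | ConnBlocks G 𝓒 ∧ A ∈ 𝓒 ∧ B ∈ 𝓒} :=
      ⟨hCconn, ⟨hA, fun h => hAC (Set.mem_singleton_iff.1 h)⟩, ⟨hB, fun h => hCB (Set.mem_singleton_iff.1 h).symm⟩⟩
    have := hmin hmem Set.diff_subset
    rw [id, id] at this
    have : C ∉ 𝓒 := by
      intro hC
      have h2 : C ∈ 𝓒 \ {C} := this hC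
      exact h2.2 rfl
    exact this hCT.1

/-! ### Basic facts about incidence vectors and the polytope -/

/-- The generating point set of `CBP G`. -/
def genSet (G : SimpleGraph V) : Set (Block G → ℝ) :=
  {x | ∃ 𝓐 : Set (Block G), ConnBlocks G 𝓐 ∧ x = incVec G 𝓐}

lemma CBP_eq_hull : CBP G = convexHull ℝ (genSet G) := rfl

open Classical in
lemma incVec_apply (𝓐 : Set (Block G)) (A : Block G) :
    incVec G 𝓐 A = if A ∈ 𝓐 then 1 else 0 := by
  rw [incVec, Set.indicator_apply]
  split <;> simp_all

lemma incVec_apply_mem {𝓐 : Set (Block G)} {A : Block G} (h : A ∈ 𝓐) :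
    incVec G 𝓐 A = 1 := by rw [incVec_apply]; simp [h]

lemma incVec_apply_not_mem {𝓐 : Set (Block G)} {A : Block G} (h : A ∉ 𝓐) :
    incVec G 𝓐 A = 0 := by rw [incVec_apply]; simp [h]

/-- The ambient cube. -/
def cube (G : SimpleGraph V) : Set (Block G → ℝ) :=
  Set.univ.pi fun _ => Set.Icc (0 : ℝ) 1

lemma mem_cube {x : Block G → ℝ} : x ∈ cube G ↔ ∀ A, 0 ≤ x A ∧ x A ≤ 1 := by
  constructor
  · intro h A; exact h A trivial
  · intro h A _; exact h A

lemma genSet_subset_cube : genSet G ⊆ cube G := by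
  rintro x ⟨𝓐, -, rfl⟩
  rw [mem_cube]
  intro A
  rw [incVec_apply]
  split <;> norm_num

lemma CBP_subset_cube : CBP G ⊆ cube G :=
  convexHull_min genSet_subset_cube (convex_pi fun _ _ => convex_Icc _ _)

lemma incVec_mem_CBP {𝓐 : Set (Block G)} (h : ConnBlocks G 𝓐) : incVec G 𝓐 ∈ CBP G :=
  subset_convexHull ℝ _ ⟨𝓐, h, rfl⟩

lemma incVec_injective : Function.Injective (incVec G) := by
  intro 𝓐 𝓑 h
  ext A
  constructor <;> intro hA
  · by_contra hB
    have := incVec_apply_mem hA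
    rw [h, incVec_apply_not_mem hB] at this
    norm_num at this
  · by_contra hB
    have := incVec_apply_mem hA
    rw [← h, incVec_apply_not_mem hB] at this
    norm_num at this

/-- Incidence vectors of connected families are extreme points of `CBP G`. -/
lemma incVec_extremePoint {𝓐 : Set (Block G)} (h : ConnBlocks G 𝓐) :
    incVec G 𝓐 ∈ (CBP G).extremePoints ℝ := by
  rw [mem_extremePoints]
  refine ⟨incVec_mem_CBP h, ?_⟩
  intro x₁ hx₁ x₂ hx₂ hseg
  obtain ⟨a, b, ha, hb, hab, heq⟩ := hseg
  have h₁ := mem_cube.1 (CBP_subset_cube hx₁)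
  have h₂ := mem_cube.1 (CBP_subset_cube hx₂)
  have key : ∀ A, x₁ A = incVec G 𝓐 A ∧ x₂ A = incVec G 𝓐 A := by
    intro A
    have hA : a * x₁ A + b * x₂ A = incVec G 𝓐 A := congrFun heq A
    obtain ⟨h10, h11⟩ := h₁ A
    obtain ⟨h20, h21⟩ := h₂ A
    by_cases hmem : A ∈ 𝓐
    · rw [incVec_apply_mem hmem] at hA ⊢
      constructor <;> nlinarith
    · rw [incVec_apply_not_mem hmem] at hA ⊢
      constructor <;> nlinarith
  constructor <;> [skip; skip] <;> funext A
  · exact (key A).1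
  · exact (key A).2

/-! ### Generic facts about faces of convex hulls -/

section Faces

variable {E : Type*} [AddCommGroup E] [Module ℝ E]

lemma le_on_hull {s : Set E} {f : E →ₗ[ℝ] ℝ} {c : ℝ} (h : ∀ y ∈ s, f y ≤ c) :
    ∀ x ∈ convexHull ℝ s, f x ≤ c := fun x hx =>
  convexHull_min h (convex_halfSpace_le f.isLinear c) hx

/-- The level set of a linear functional bounded above on `s` is a face of the hull. -/
lemma isFaceOf_level {s : Set E} {f : E →ₗ[ℝ] ℝ} {c : ℝ} (h : ∀ y ∈ s, f y ≤ c) :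
    IsFaceOf (convexHull ℝ s) {x ∈ convexHull ℝ s | f x = c} := by
  refine ⟨fun x hx => hx.1, ((convex_convexHull ℝ s).inter (convex_hyperplane f.isLinear c)), ?_⟩
  intro x hx y hy t ht0 ht1 hmem
  have hfx : f x ≤ c := le_on_hull h x hx
  have hfy : f y ≤ c := le_on_hull h y hy
  have heq : t * f x + (1 - t) * f y = c := by
    have := hmem.2
    simpa [map_add, map_smul, smul_eq_mul] using this
  have h1 : f x = c := by nlinarith
  have h2 : f y = c := by nlinarith
  exact ⟨⟨hx, h1⟩, ⟨hy, h2⟩⟩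

/-- Faces absorb the generators of convex combinations landing in them. -/
lemma IsFaceOf.centerMass_mem {P F : Set E} (hP : Convex ℝ P) (hF : IsFaceOf P F)
    {ι : Type*} (t : Finset ι) (w : ι → ℝ) (z : ι → E) :
    (∀ i ∈ t, 0 < w i) → 0 < ∑ i ∈ t, w i → (∀ i ∈ t, z i ∈ P) →
      t.centerMass w z ∈ F → ∀ i ∈ t, z i ∈ F := by
  classical
  induction t using Finset.induction_on with
  | empty => intro _ _ _ _ i hi; simp at hi
  | @insert a t ha ih =>
    intro hw hsum hz hmem
    rcases Finset.eq_empty_or_nonempty t with rfl | htne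
    · have hwa : w a ≠ 0 := (hw a (by simp)).ne'
      have hsingl : insert a (∅ : Finset ι) = {a} := rfl
      rw [hsingl, Finset.centerMass_singleton (hw := hwa)] at hmem
      intro i hi
      simp only [Finset.mem_insert, Finset.notMem_empty, or_false] at hi
      subst hi; exact hmem
    · have hW' : 0 < ∑ j ∈ t, w j :=
        Finset.sum_pos (fun j hj => hw j (Finset.mem_insert_of_mem hj)) htne
      have hwa : 0 < w a := hw a (Finset.mem_insert_self a t)
      have hWtot : 0 < w a + ∑ j ∈ t, w j := by positivity
      rw [Finset.centerMass_insert (ha := ha) (hw := hW'.ne')] at hmem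
      set τ := w a / (w a + ∑ j ∈ t, w j) with hτ
      have hτ0 : 0 < τ := by positivity
      have hτ1 : τ < 1 := by
        rw [hτ, div_lt_one hWtot]; linarith
      have hrest : (∑ j ∈ t, w j) / (w a + ∑ j ∈ t, w j) = 1 - τ := by
        rw [hτ, eq_sub_iff_add_eq, ← add_div, div_eq_one_iff_eq hWtot.ne']; ring
      rw [hrest] at hmem
      have hcmP : t.centerMass w z ∈ P := by
        have := Finset.centerMass_mem_convexHull t
          (fun j hj => (hw j (Finset.mem_insert_of_mem hj)).le) hW'
          (fun j hj => hz j (Finset.mem_insert_of_mem hj))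
        rwa [hP.convexHull_eq] at this
      obtain ⟨hzaF, hcmF⟩ := hF.2.2 (z a) (hz a (Finset.mem_insert_self a t))
        (t.centerMass w z) hcmP τ hτ0 hτ1 hmem
      intro i hi
      rcases Finset.mem_insert.1 hi with rfl | hi
      · exact hzaF
      · exact ih (fun j hj => hw j (Finset.mem_insert_of_mem hj)) hW'
          (fun j hj => hz j (Finset.mem_insert_of_mem hj)) hcmF i hi

/-- Every face of a hull is the hull of the generators it contains. -/
lemma IsFaceOf.eq_hull_inter {s F : Set E} (hF : IsFaceOf (convexHull ℝ s) F) :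
    F = convexHull ℝ (s ∩ F) := by
  classical
  apply Set.eq_of_subset_of_subset
  · intro x hxF
    have hx : x ∈ convexHull ℝ s := hF.1 hxF
    rw [convexHull_eq] at hx
    obtain ⟨ι, t, w, z, hw0, hsum, hz, hcm⟩ := hx
    set t' := t.filter (fun i => w i ≠ 0) with ht'
    have hcm' : t'.centerMass w z = x := by
      rw [ht', Finset.centerMass_filter_ne_zero, hcm]
    have hw' : ∀ i ∈ t', 0 < w i := by
      intro i hi
      rw [ht', Finset.mem_filter] at hi
      exact lt_of_le_of_ne (hw0 i hi.1) (Ne.symm hi.2)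
    have hsum' : ∑ i ∈ t', w i = 1 := by
      rw [ht', Finset.sum_filter_ne_zero, hsum]
    have habs := hF.centerMass_mem (convex_convexHull ℝ s) t' w z hw'
      (by rw [hsum']; norm_num)
      (fun i hi => subset_convexHull ℝ s (hz i (Finset.mem_of_mem_filter i hi)))
      (hcm'.symm ▸ hxF)
    rw [← hcm']
    exact Finset.centerMass_mem_convexHull t' (fun i hi => (hw' i hi).le)
      (by rw [hsum']; norm_num)
      (fun i hi => ⟨hz i (Finset.mem_of_mem_filter i hi), habs i hi⟩)
  · exact convexHull_min Set.inter_subset_right hF.2.1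

/-- The level face is the hull of the tight generators. -/
lemma level_face_eq_hull {s : Set E} {f : E →ₗ[ℝ] ℝ} {c : ℝ} (h : ∀ y ∈ s, f y ≤ c) :
    {x ∈ convexHull ℝ s | f x = c} = convexHull ℝ {y ∈ s | f y = c} := by
  classical
  apply Set.eq_of_subset_of_subset
  · rintro x ⟨hx, hfx⟩
    rw [convexHull_eq] at hx
    obtain ⟨ι, t, w, z, hw0, hsum, hz, hcm⟩ := hx
    set t' := t.filter (fun i => w i ≠ 0) with ht'
    have hcm' : t'.centerMass w z = x := by
      rw [ht', Finset.centerMass_filter_ne_zero, hcm]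
    have hw' : ∀ i ∈ t', 0 < w i := by
      intro i hi
      rw [ht', Finset.mem_filter] at hi
      exact lt_of_le_of_ne (hw0 i hi.1) (Ne.symm hi.2)
    have hsum' : ∑ i ∈ t', w i = 1 := by
      rw [ht', Finset.sum_filter_ne_zero, hsum]
    have hxsum : x = ∑ i ∈ t', w i • z i := by
      rw [← hcm', Finset.centerMass_eq_of_sum_1 _ _ hsum']
    have hfsum : ∑ i ∈ t', w i * f (z i) = c := by
      have : f x = c := hfx
      rw [hxsum] at this
      rw [← this, map_sum]
      simp [smul_eq_mul]
    have hle : ∀ i ∈ t', w i * f (z i) ≤ w i * c := fun i hi =>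
      mul_le_mul_of_nonneg_left (h (z i) (hz i (Finset.mem_of_mem_filter i hi))) (hw' i hi).le
    have hcsum : ∑ i ∈ t', w i * c = c := by
      rw [← Finset.sum_mul, hsum', one_mul]
    have htight : ∀ i ∈ t', w i * f (z i) = w i * c :=
      (Finset.sum_eq_sum_iff_of_le hle).1 (by rw [hfsum, hcsum])
    rw [← hcm']
    refine Finset.centerMass_mem_convexHull t' (fun i hi => (hw' i hi).le)
      (by rw [hsum']; norm_num) (fun i hi => ?_)
    refine ⟨hz i (Finset.mem_of_mem_filter i hi), ?_⟩
    have := htight i hi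
    have hwne := (hw' i hi).ne'
    exact mul_left_cancel₀ hwne this
  · refine convexHull_min (fun y hy => ⟨subset_convexHull ℝ s hy.1, hy.2⟩) ?_
    exact (convex_convexHull ℝ s).inter (convex_hyperplane f.isLinear c)

/-- dimension of a segment between distinct points -/
lemma polyDim_segment {x y : E} (hxy : x ≠ y) : polyDim (segment ℝ x y) = 1 := by
  rw [polyDim, ← convexHull_pair, affineSpan_convexHull, direction_affineSpan,
    vectorSpan_pair]
  have : x -ᵥ y ≠ 0 := by
    simp only [vsub_eq_sub, sub_ne_zero]
    exact hxy
  exact finrank_span_singleton this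

end Faces

/-! ### Linear functionals on the block space -/

/-- The linear functional `x ↦ ∑ A, c A * x A`. -/
def lin (G : SimpleGraph V) (c : Block G → ℝ) : (Block G → ℝ) →ₗ[ℝ] ℝ where
  toFun x := ∑ A : Block G, c A * x A
  map_add' x y := by
    simp only [Pi.add_apply, mul_add]
    rw [Finset.sum_add_distrib]
  map_smul' r x := by
    simp only [Pi.smul_apply, smul_eq_mul, RingHom.id_apply, Finset.mul_sum]
    exact Finset.sum_congr rfl fun A _ => by ring

lemma lin_incVec (c : Block G → ℝ) (𝓒 : Set (Block G)) :
    lin G c (incVec G 𝓒) = ∑ A ∈ (Set.toFinite 𝓒).toFinset, c A := by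
  classical
  have : ∀ A : Block G, c A * incVec G 𝓒 A =
      if A ∈ (Set.toFinite 𝓒).toFinset then c A else 0 := by
    intro A
    by_cases hA : A ∈ 𝓒
    · rw [incVec_apply_mem hA, if_pos ((Set.Finite.mem_toFinset _).2 hA)]; ring
    · rw [incVec_apply_not_mem hA, if_neg (fun h => hA ((Set.Finite.mem_toFinset _).1 h))]; ring
  show (∑ A : Block G, c A * incVec G 𝓒 A) = _
  rw [Finset.sum_congr rfl fun A _ => this A, Finset.sum_ite_mem, Finset.univ_inter]

section EdgeFace

variable {𝓐 : Set (Block G)} {B : Block G}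

open Classical in
/-- The coefficients defining the edge between `𝓐` and `insert B 𝓐`. -/
noncomputable def edgeCoeff (𝓐 : Set (Block G)) (B : Block G) : Block G → ℝ :=
  fun A => if A ∈ 𝓐 then 1 else if A = B then 0 else -((𝓐.ncard : ℝ) + 1)

lemma edgeCoeff_sum_le (hB : B ∉ 𝓐) (𝓒 : Set (Block G)) :
    lin G (edgeCoeff 𝓐 B) (incVec G 𝓒) ≤ (𝓐.ncard : ℝ) ∧
      (lin G (edgeCoeff 𝓐 B) (incVec G 𝓒) = (𝓐.ncard : ℝ) ↔
        (𝓒 = 𝓐 ∨ 𝓒 = insert B 𝓐)) := by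
  classical
  rw [lin_incVec]
  set CF := (Set.toFinite 𝓒).toFinset with hCF
  set AF := (Set.toFinite 𝓐).toFinset with hAF
  have hAcard : 𝓐.ncard = AF.card := by
    rw [hAF]
    exact Set.ncard_eq_toFinset_card 𝓐 (Set.toFinite 𝓐)
  have hsplit := Finset.sum_filter_add_sum_filter_not CF (fun A => A ∈ 𝓐) (edgeCoeff 𝓐 B)
  set k := (CF.filter (fun A => A ∈ 𝓐)).card with hk
  set m := ((CF.filter (fun A => A ∉ 𝓐)).filter (fun A => A ≠ B)).card with hm
  have h1 : ∑ A ∈ CF.filter (fun A => A ∈ 𝓐), edgeCoeff 𝓐 B A = (k : ℝ) := by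
    rw [hk, Finset.card_eq_sum_ones, Nat.cast_sum]
    apply Finset.sum_congr rfl
    intro A hA
    rw [Finset.mem_filter] at hA
    simp [edgeCoeff, hA.2]
  have h2 : ∑ A ∈ CF.filter (fun A => A ∉ 𝓐), edgeCoeff 𝓐 B A =
      -((𝓐.ncard : ℝ) + 1) * (m : ℝ) := by
    have hsplit2 := Finset.sum_filter_add_sum_filter_not (CF.filter (fun A => A ∉ 𝓐))
      (fun A => A ≠ B) (edgeCoeff 𝓐 B)
    have h2a : ∑ A ∈ (CF.filter (fun A => A ∉ 𝓐)).filter (fun A => A ≠ B),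
        edgeCoeff 𝓐 B A = -((𝓐.ncard : ℝ) + 1) * (m : ℝ) := by
      rw [hm, Finset.card_eq_sum_ones, Nat.cast_sum]
      rw [Finset.mul_sum]
      apply Finset.sum_congr rfl
      intro A hA
      simp only [Finset.mem_filter] at hA
      simp [edgeCoeff, hA.1.2, hA.2]
    have h2b : ∑ A ∈ (CF.filter (fun A => A ∉ 𝓐)).filter (fun A => ¬ A ≠ B),
        edgeCoeff 𝓐 B A = 0 := by
      apply Finset.sum_eq_zero
      intro A hA
      simp only [Finset.mem_filter, not_not] at hA
      simp [edgeCoeff, hA.1.2, hA.2, hB]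
    rw [← hsplit2, h2a, h2b, add_zero]
  rw [← hsplit, h1, h2]
  have hkA : k ≤ 𝓐.ncard := by
    rw [hAcard, hk]
    apply Finset.card_le_card
    intro A hA
    rw [Finset.mem_filter] at hA
    rw [hAF, Set.Finite.mem_toFinset]
    exact hA.2
  have hkiff : k = 𝓐.ncard ↔ 𝓐 ⊆ 𝓒 := by
    constructor
    · intro hkk
      intro A hA
      -- AF ⊆ CF.filter (· ∈ 𝓐)
      have hsub : CF.filter (fun A => A ∈ 𝓐) ⊆ AF := by
        intro x hx
        rw [Finset.mem_filter] at hx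
        rw [hAF, Set.Finite.mem_toFinset]
        exact hx.2
      have := Finset.eq_of_subset_of_card_le hsub (by omega)
      have hAmem : A ∈ CF.filter (fun A => A ∈ 𝓐) := by
        rw [this, hAF, Set.Finite.mem_toFinset]
        exact hA
      rw [Finset.mem_filter, hCF, Set.Finite.mem_toFinset] at hAmem
      exact hAmem.1
    · intro hsub
      rw [hAcard, hk]
      congr 1
      apply Finset.ext
      intro x
      rw [Finset.mem_filter, hCF, hAF, Set.Finite.mem_toFinset, Set.Finite.mem_toFinset]
      exact ⟨fun h => h.2, fun h => ⟨hsub h, h⟩⟩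
  have hmiff : m = 0 ↔ 𝓒 ⊆ insert B 𝓐 := by
    rw [hm, Finset.card_eq_zero]
    constructor
    · intro hempty x hx
      by_contra hxmem
      rw [Set.mem_insert_iff] at hxmem
      push_neg at hxmem
      have : x ∈ ((CF.filter (fun A => A ∉ 𝓐)).filter (fun A => A ≠ B)) := by
        rw [Finset.mem_filter, Finset.mem_filter, hCF, Set.Finite.mem_toFinset]
        exact ⟨⟨hx, hxmem.2⟩, hxmem.1⟩
      rw [hempty] at this
      exact absurd this (Finset.notMem_empty x)
    · intro hsub
      rw [Finset.eq_empty_iff_forall_notMem]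
      intro x hx
      simp only [Finset.mem_filter, hCF, Set.Finite.mem_toFinset] at hx
      rcases hsub hx.1.1 with h | h
      · exact hx.2 h
      · exact hx.1.2 h
  constructor
  · -- the inequality
    rcases Nat.eq_zero_or_pos m with hm0 | hmpos
    · rw [hm0]
      push_cast
      have : (k : ℝ) ≤ (𝓐.ncard : ℝ) := by exact_mod_cast hkA
      linarith
    · have hm1 : (1 : ℝ) ≤ (m : ℝ) := by exact_mod_cast hmpos
      have : (k : ℝ) ≤ (𝓐.ncard : ℝ) := by exact_mod_cast hkA
      nlinarith
  · constructor
    · intro heq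
      have hm0 : m = 0 := by
        by_contra hm0
        have hmpos : 1 ≤ m := Nat.one_le_iff_ne_zero.2 hm0
        have hm1 : (1 : ℝ) ≤ (m : ℝ) := by exact_mod_cast hmpos
        have hkR : (k : ℝ) ≤ (𝓐.ncard : ℝ) := by exact_mod_cast hkA
        nlinarith
      have hkeq : k = 𝓐.ncard := by
        rw [hm0] at heq
        push_cast at heq
        have hkr : (k : ℝ) = (𝓐.ncard : ℝ) := by linarith
        exact_mod_cast hkr
      have hsub1 : 𝓐 ⊆ 𝓒 := hkiff.1 hkeq
      have hsub2 : 𝓒 ⊆ insert B 𝓐 := hmiff.1 hm0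
      by_cases hBC : B ∈ 𝓒
      · right
        apply Set.eq_of_subset_of_subset hsub2
        intro x hx
        rcases Set.mem_insert_iff.1 hx with rfl | hx
        · exact hBC
        · exact hsub1 hx
      · left
        apply Set.eq_of_subset_of_subset _ hsub1
        intro x hx
        rcases Set.mem_insert_iff.1 (hsub2 hx) with rfl | h
        · exact absurd hx hBC
        · exact h
    · rintro (rfl | rfl)
      · have hm0 : m = 0 := hmiff.2 (Set.subset_insert _ _)
        have hkeq : k = 𝓒.ncard := hkiff.2 subset_rfl
        rw [hm0, hkeq]
        push_cast
        ring
      · have hm0 : m = 0 := hmiff.2 subset_rfl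
        have hkeq : k = 𝓐.ncard := hkiff.2 (Set.subset_insert _ _)
        rw [hm0, hkeq]
        push_cast
        ring

/-- The polytope edge between a connected family and its one-block extension. -/
lemma edge_adj (hB : B ∉ 𝓐) (hA : ConnBlocks G 𝓐) (hA' : ConnBlocks G (insert B 𝓐)) :
    (polyGraph (CBP G)).Adj (incVec G 𝓐) (incVec G (insert B 𝓐)) := by
  classical
  have hne : incVec G 𝓐 ≠ incVec G (insert B 𝓐) := by
    intro h
    exact hB (incVec_injective h ▸ Set.mem_insert B 𝓐)
  have hbound : ∀ y ∈ genSet G, lin G (edgeCoeff 𝓐 B) y ≤ (𝓐.ncard : ℝ) := by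
    rintro y ⟨𝓒, -, rfl⟩
    exact (edgeCoeff_sum_le hB 𝓒).1
  have htight : {y ∈ genSet G | lin G (edgeCoeff 𝓐 B) y = (𝓐.ncard : ℝ)} =
      {incVec G 𝓐, incVec G (insert B 𝓐)} := by
    apply Set.eq_of_subset_of_subset
    · rintro y ⟨⟨𝓒, h𝓒, rfl⟩, hy⟩
      rcases ((edgeCoeff_sum_le hB 𝓒).2).1 hy with rfl | rfl
      · exact Or.inl rfl
      · exact Or.inr rfl
    · rintro y (rfl | rfl)
      · exact ⟨⟨𝓐, hA, rfl⟩, ((edgeCoeff_sum_le hB 𝓐).2).2 (Or.inl rfl)⟩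
      · exact ⟨⟨insert B 𝓐, hA', rfl⟩, ((edgeCoeff_sum_le hB (insert B 𝓐)).2).2 (Or.inr rfl)⟩
  have hface := isFaceOf_level (s := genSet G) hbound
  have hlevel := level_face_eq_hull (s := genSet G) hbound
  rw [htight, convexHull_pair] at hlevel
  rw [CBP_eq_hull]
  rw [← CBP_eq_hull] at hface hlevel ⊢
  rw [hlevel] at hface
  exact ⟨hne, incVec_extremePoint hA, incVec_extremePoint hA', hface, polyDim_segment hne⟩

end EdgeFace

/-! ### Dimension computations -/

lemma incVec_empty : incVec G (∅ : Set (Block G)) = 0 := by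
  funext A
  rw [incVec_apply_not_mem (Set.notMem_empty A)]
  rfl

lemma incVec_singleton (B : Block G) : incVec G {B} = Pi.single B 1 := by
  classical
  funext A
  rw [Pi.single_apply]
  by_cases h : A = B
  · subst h; rw [incVec_apply_mem (Set.mem_singleton A), if_pos rfl]
  · rw [incVec_apply_not_mem (by simpa using h), if_neg h]

lemma incVec_sub_single {𝓒 : Set (Block G)} {A : Block G} (hA : A ∈ 𝓒) :
    incVec G 𝓒 - incVec G (𝓒 \ {A}) = Pi.single A 1 := by
  classical
  funext X
  rw [Pi.sub_apply, Pi.single_apply]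
  by_cases h : X = A
  · subst h
    rw [incVec_apply_mem hA, incVec_apply_not_mem (fun hc => hc.2 rfl), if_pos rfl]
    norm_num
  · rw [if_neg h]
    by_cases hX : X ∈ 𝓒
    · rw [incVec_apply_mem hX, incVec_apply_mem ((Set.mem_diff _).2 ⟨hX, by simpa using h⟩), sub_self]
    · rw [incVec_apply_not_mem hX, incVec_apply_not_mem (fun hc => hX hc.1), sub_self]

/-- The polytope `CBP G` has full dimension. -/
lemma polyDim_CBP : polyDim (CBP G) = Fintype.card (Block G) := by
  classical
  rw [polyDim, CBP_eq_hull, affineSpan_convexHull, direction_affineSpan]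
  have htop : vectorSpan ℝ (genSet G) = ⊤ := by
    apply eq_top_iff.2
    rw [← (Pi.basisFun ℝ (Block G)).span_eq]
    apply Submodule.span_le.2
    rintro v ⟨B, rfl⟩
    rw [Pi.basisFun_apply]
    have h1 : incVec G {B} ∈ genSet G := ⟨{B}, connBlocks_singleton B, rfl⟩
    have h2 : incVec G (∅ : Set (Block G)) ∈ genSet G := ⟨∅, connBlocks_empty, rfl⟩
    have := vsub_mem_vectorSpan ℝ h1 h2
    rwa [vsub_eq_sub, incVec_empty, sub_zero, incVec_singleton] at this
  rw [htop, finrank_top, Module.finrank_pi]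

/-- The key dimension count for the facets. -/
lemma finrank_vectorSpan_pred {s : Set (Block G → ℝ)} {B : Block G} {c : ℝ}
    (hc : ∀ y ∈ s, y B = c)
    (hplus : ∀ A : Block G, A ≠ B → Pi.single A (1 : ℝ) ∈ vectorSpan ℝ s) :
    Module.finrank ℝ (vectorSpan ℝ s) = Fintype.card (Block G) - 1 := by
  classical
  have hn1 : 1 ≤ Fintype.card (Block G) := Fintype.card_pos_iff.2 ⟨B⟩
  -- upper bound : contained in the kernel of the projection
  have hker : vectorSpan ℝ s ≤ LinearMap.ker (LinearMap.proj (R := ℝ)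
      (φ := fun _ : Block G => ℝ) B) := by
    rw [vectorSpan_def]
    apply Submodule.span_le.2
    rintro v ⟨x, hx, y, hy, rfl⟩
    rw [SetLike.mem_coe, LinearMap.mem_ker]
    show (x -ᵥ y) B = 0
    have : (x -ᵥ y) B = x B - y B := rfl
    rw [this, hc x hx, hc y hy, sub_self]
  have hkerrank : Module.finrank ℝ (LinearMap.ker (LinearMap.proj (R := ℝ)
      (φ := fun _ : Block G => ℝ) B)) = Fintype.card (Block G) - 1 := by
    have hrn := LinearMap.finrank_range_add_finrank_ker
      (LinearMap.proj (R := ℝ) (φ := fun _ : Block G => ℝ) B)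
    have hsurj : LinearMap.range (LinearMap.proj (R := ℝ)
        (φ := fun _ : Block G => ℝ) B) = ⊤ :=
      LinearMap.range_eq_top.2 (fun r => ⟨fun _ => r, rfl⟩)
    rw [hsurj, finrank_top, Module.finrank_self, Module.finrank_pi] at hrn
    omega
  have hupper : Module.finrank ℝ (vectorSpan ℝ s) ≤ Fintype.card (Block G) - 1 := by
    rw [← hkerrank]
    exact Submodule.finrank_mono hker
  -- lower bound : the span of the singles
  have hlower : Fintype.card (Block G) - 1 ≤ Module.finrank ℝ (vectorSpan ℝ s) := by
    set g : {A : Block G // A ≠ B} → (Block G → ℝ) := fun A => Pi.single A.1 1 with hg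
    have hli : LinearIndependent ℝ g := by
      have hli0 : LinearIndependent ℝ (fun A : {A : Block G // A ≠ B} =>
          (Pi.basisFun ℝ (Block G)) A.1) :=
        (Pi.basisFun ℝ (Block G)).linearIndependent.comp Subtype.val Subtype.val_injective
      have hge : g = fun A : {A : Block G // A ≠ B} => (Pi.basisFun ℝ (Block G)) A.1 := by
        funext A
        rw [hg, Pi.basisFun_apply]
      rw [hge]
      exact hli0
    have hspan : Submodule.span ℝ (Set.range g) ≤ vectorSpan ℝ s := by
      apply Submodule.span_le.2
      rintro v ⟨A, rfl⟩
      exact hplus A.1 A.2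
    have hcard : Module.finrank ℝ (Submodule.span ℝ (Set.range g)) =
        Fintype.card (Block G) - 1 := by
      rw [finrank_span_eq_card hli]
      simp [Fintype.card_subtype_compl, Fintype.card_subtype_eq]
    rw [← hcard]
    exact Submodule.finrank_mono hspan
  omega

/-! ### The 2n coordinate facets -/

/-- The facet `x B = 0`. -/
def F0 (G : SimpleGraph V) (B : Block G) : Set (Block G → ℝ) := {x ∈ CBP G | x B = 0}

/-- The facet `x B = 1`. -/
def F1 (G : SimpleGraph V) (B : Block G) : Set (Block G → ℝ) := {x ∈ CBP G | x B = 1}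

lemma isFacetOf_F0 (B : Block G) : IsFacetOf (CBP G) (F0 G B) := by
  classical
  set f : (Block G → ℝ) →ₗ[ℝ] ℝ := -(LinearMap.proj B) with hf
  have happ : ∀ x : Block G → ℝ, f x = -(x B) := fun x => rfl
  have hbound : ∀ y ∈ genSet G, f y ≤ 0 := by
    intro y hy
    rw [happ, neg_nonpos]
    exact (mem_cube.1 (genSet_subset_cube hy) B).1
  have hset : {x ∈ convexHull ℝ (genSet G) | f x = 0} = F0 G B := by
    ext x
    simp only [Set.mem_setOf_eq, happ, neg_eq_zero, F0, CBP_eq_hull]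
  have htight : {y ∈ genSet G | f y = 0} = {y ∈ genSet G | y B = 0} := by
    ext y
    simp only [Set.mem_setOf_eq, happ, neg_eq_zero]
  constructor
  · have := isFaceOf_level (s := genSet G) hbound
    rwa [hset, ← CBP_eq_hull] at this
  · have hlevel := level_face_eq_hull (s := genSet G) hbound
    rw [hset, htight] at hlevel
    rw [hlevel, polyDim, affineSpan_convexHull, direction_affineSpan, polyDim_CBP]
    apply finrank_vectorSpan_pred (B := B) (c := 0)
    · exact fun y hy => hy.2
    · intro A hA
      have h1 : incVec G {A} ∈ {y ∈ genSet G | y B = 0} :=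
        ⟨⟨{A}, connBlocks_singleton A, rfl⟩,
          incVec_apply_not_mem (by simpa using (Ne.symm hA))⟩
      have h2 : incVec G (∅ : Set (Block G)) ∈ {y ∈ genSet G | y B = 0} :=
        ⟨⟨∅, connBlocks_empty, rfl⟩, incVec_apply_not_mem (Set.notMem_empty B)⟩
      have := vsub_mem_vectorSpan ℝ h1 h2
      rwa [vsub_eq_sub, incVec_empty, sub_zero, incVec_singleton] at this

lemma isFacetOf_F1 (hG : G.Connected) (B : Block G) : IsFacetOf (CBP G) (F1 G B) := by
  classical
  set f : (Block G → ℝ) →ₗ[ℝ] ℝ := LinearMap.proj B with hf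
  have happ : ∀ x : Block G → ℝ, f x = x B := fun x => rfl
  have hbound : ∀ y ∈ genSet G, f y ≤ 1 := by
    intro y hy
    rw [happ]
    exact (mem_cube.1 (genSet_subset_cube hy) B).2
  have hset : {x ∈ convexHull ℝ (genSet G) | f x = 1} = F1 G B := by
    ext x
    simp only [Set.mem_setOf_eq, happ, F1, CBP_eq_hull]
  constructor
  · have := isFaceOf_level (s := genSet G) hbound
    rwa [hset, ← CBP_eq_hull] at this
  · have hlevel := level_face_eq_hull (s := genSet G) hbound
    rw [hset] at hlevel
    rw [hlevel, polyDim, affineSpan_convexHull, direction_affineSpan, polyDim_CBP]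
    apply finrank_vectorSpan_pred (B := B) (c := 1)
    · exact fun y hy => hy.2
    · intro A hA
      obtain ⟨𝓒, hconn, hA𝓒, hB𝓒, hconn', hB𝓒'⟩ := exists_conn_pair hG hA
      have h1 : incVec G 𝓒 ∈ {y ∈ genSet G | f y = 1} :=
        ⟨⟨𝓒, hconn, rfl⟩, by rw [happ]; exact incVec_apply_mem hB𝓒⟩
      have h2 : incVec G (𝓒 \ {A}) ∈ {y ∈ genSet G | f y = 1} :=
        ⟨⟨𝓒 \ {A}, hconn', rfl⟩, by rw [happ]; exact incVec_apply_mem hB𝓒'⟩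
      have := vsub_mem_vectorSpan ℝ h1 h2
      rwa [vsub_eq_sub, incVec_sub_single hA𝓒] at this

/-- The set of faces of `CBP G` is finite. -/
lemma faces_finite : {F : Set (Block G → ℝ) | IsFaceOf (CBP G) F}.Finite := by
  have hgen : (genSet G).Finite := by
    have himg : genSet G = incVec G '' {𝓐 : Set (Block G) | ConnBlocks G 𝓐} := by
      ext x
      simp only [genSet, Set.mem_setOf_eq, Set.mem_image]
      constructor
      · rintro ⟨𝓐, h, rfl⟩; exact ⟨𝓐, h, rfl⟩
      · rintro ⟨𝓐, h, rfl⟩; exact ⟨𝓐, h, rfl⟩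
    rw [himg]
    exact (Set.toFinite _).image _
  apply Set.Finite.subset ((hgen.finite_subsets).image (convexHull ℝ))
  intro F hF
  refine ⟨genSet G ∩ F, Set.inter_subset_left, ?_⟩
  exact (IsFaceOf.eq_hull_inter (by rwa [CBP_eq_hull] at hF)).symm

lemma facets_finite : {F : Set (Block G → ℝ) | IsFacetOf (CBP G) F}.Finite :=
  faces_finite.subset fun F hF => hF.1

lemma zero_mem_CBP : (0 : Block G → ℝ) ∈ CBP G := by
  rw [← incVec_empty]
  exact incVec_mem_CBP connBlocks_empty

/-- There are at least `2n` facets. -/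
lemma two_card_le_facets (hG : G.Connected) :
    2 * Fintype.card (Block G) ≤
      {F : Set (Block G → ℝ) | IsFacetOf (CBP G) F}.ncard := by
  classical
  have hF0inj : Function.Injective (F0 G) := by
    intro A A' h
    by_contra hne
    have hx : incVec G {A'} ∈ F0 G A :=
      ⟨incVec_mem_CBP (connBlocks_singleton A'),
        incVec_apply_not_mem (by simpa using hne)⟩
    rw [h] at hx
    have := hx.2
    rw [incVec_apply_mem (Set.mem_singleton A')] at this
    norm_num at this
  have hF1inj : Function.Injective (F1 G) := by
    intro A A' h
    by_contra hne
    have hx : incVec G {A} ∈ F1 G A :=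
      ⟨incVec_mem_CBP (connBlocks_singleton A), incVec_apply_mem (Set.mem_singleton A)⟩
    rw [h] at hx
    have := hx.2
    rw [incVec_apply_not_mem (by simpa using (Ne.symm hne))] at this
    norm_num at this
  have hdisj : Disjoint (Set.range (F0 G)) (Set.range (F1 G)) := by
    rw [Set.disjoint_left]
    rintro F ⟨A, rfl⟩ ⟨A', hA'⟩
    have h0 : (0 : Block G → ℝ) ∈ F0 G A := ⟨zero_mem_CBP, rfl⟩
    rw [← hA'] at h0
    have := h0.2
    norm_num at this
  have hsub : Set.range (F0 G) ∪ Set.range (F1 G) ⊆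
      {F : Set (Block G → ℝ) | IsFacetOf (CBP G) F} := by
    rintro F (⟨A, rfl⟩ | ⟨A, rfl⟩)
    · exact isFacetOf_F0 A
    · exact isFacetOf_F1 hG A
  have hcard : (Set.range (F0 G) ∪ Set.range (F1 G)).ncard =
      2 * Fintype.card (Block G) := by
    rw [Set.ncard_union_eq hdisj (Set.toFinite _) (Set.toFinite _)]
    rw [← Set.image_univ, ← Set.image_univ,
      Set.ncard_image_of_injective _ hF0inj, Set.ncard_image_of_injective _ hF1inj,
      Set.ncard_univ, Nat.card_eq_fintype_card]
    ring
  rw [← hcard]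
  exact Set.ncard_le_ncard hsub facets_finite

/-! ### Walks in the polytope graph -/

lemma blockUnion_union (𝓐 𝓑 : Set (Block G)) :
    blockUnion G (𝓐 ∪ 𝓑) = blockUnion G 𝓐 ⊔ blockUnion G 𝓑 := by
  rw [blockUnion, blockUnion, blockUnion, iSup_union]

/-- Walks going down from a connected family to a connected subfamily. -/
lemma exists_walk_down : ∀ (m : ℕ) (𝓐 : Set (Block G)), ConnBlocks G 𝓐 →
    ∀ 𝓓, ConnBlocks G 𝓓 → 𝓓 ⊆ 𝓐 → (𝓐 \ 𝓓).ncard = m →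
    ∃ w : (polyGraph (CBP G)).Walk (incVec G 𝓐) (incVec G 𝓓), w.length = m := by
  intro m
  induction m with
  | zero =>
    intro 𝓐 hA 𝓓 hD hsub hcard
    have : 𝓐 = 𝓓 := by
      apply Set.Subset.antisymm _ hsub
      rw [← Set.diff_eq_empty]
      exact (Set.ncard_eq_zero (Set.toFinite _)).1 hcard
    subst this
    exact ⟨SimpleGraph.Walk.nil, rfl⟩
  | succ m ih =>
    intro 𝓐 hA 𝓓 hD hsub hcard
    have hne : 𝓓 ≠ 𝓐 := by
      intro h
      rw [h, Set.diff_self, Set.ncard_empty] at hcard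
      omega
    obtain ⟨B, hBmem, hBconn⟩ := exists_peel hA hD hsub hne
    have hsub' : 𝓓 ⊆ 𝓐 \ {B} := fun x hx =>
      ⟨hsub hx, fun hxB => hBmem.2 ((Set.mem_singleton_iff.1 hxB) ▸ hx)⟩
    have hcard' : ((𝓐 \ {B}) \ 𝓓).ncard = m := by
      have he : (𝓐 \ {B}) \ 𝓓 = (𝓐 \ 𝓓) \ {B} := by
        ext x; simp only [Set.mem_diff, Set.mem_singleton_iff]; tauto
      rw [he, Set.ncard_diff_singleton_of_mem hBmem, hcard]
      omega
    obtain ⟨w, hw⟩ := ih (𝓐 \ {B}) hBconn 𝓓 hD hsub' hcard'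
    have hBnotin : B ∉ 𝓐 \ {B} := fun h => h.2 rfl
    have hins : insert B (𝓐 \ {B}) = 𝓐 := by
      rw [Set.insert_diff_singleton]
      exact Set.insert_eq_self.2 hBmem.1
    have hadj := edge_adj hBnotin hBconn (by rwa [hins])
    rw [hins] at hadj
    exact ⟨SimpleGraph.Walk.cons hadj.symm w, by simp [hw]⟩


/-- `CBP(G)` is Hirsch: any two vertices are joined by an edge-path of length at
most `k - d`, where `k` is the number of facets and `d = dim CBP(G)`. -/
theorem cbp_hirsch (G : SimpleGraph V) (hG : G.Connected) :
    ∀ x ∈ (CBP G).extremePoints ℝ, ∀ y ∈ (CBP G).extremePoints ℝ,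
      ∃ w : (polyGraph (CBP G)).Walk x y,
        w.length ≤ {F : Set (Block G → ℝ) | IsFacetOf (CBP G) F}.ncard
          - polyDim (CBP G) := by
  classical
  intro x hx y hy
  have hx' : x ∈ genSet G := extremePoints_convexHull_subset hx
  have hy' : y ∈ genSet G := extremePoints_convexHull_subset hy
  obtain ⟨𝓐, hA, rfl⟩ := hx'
  obtain ⟨𝓑, hB, rfl⟩ := hy'
  have hkd : Fintype.card (Block G) ≤
      {F : Set (Block G → ℝ) | IsFacetOf (CBP G) F}.ncard - polyDim (CBP G) := by
    have h1 := two_card_le_facets hG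
    rw [polyDim_CBP]
    omega
  have hcardbound : ∀ (𝓢 𝓣 : Set (Block G)), Disjoint 𝓢 𝓣 →
      𝓢.ncard + 𝓣.ncard ≤ Fintype.card (Block G) := by
    intro 𝓢 𝓣 hdisj
    rw [← Set.ncard_union_eq hdisj (Set.toFinite _) (Set.toFinite _)]
    have := Set.ncard_le_ncard (Set.subset_univ (𝓢 ∪ 𝓣)) Set.finite_univ
    rwa [Set.ncard_univ, Nat.card_eq_fintype_card] at this
  by_cases hint : (𝓐 ∩ 𝓑).Nonempty
  · -- go through the union
    obtain ⟨B0, hB0⟩ := hint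
    have hAne : 𝓐.Nonempty := ⟨B0, hB0.1⟩
    have hBne : 𝓑.Nonempty := ⟨B0, hB0.2⟩
    have hU : ConnBlocks G (𝓐 ∪ 𝓑) := by
      right
      rw [blockUnion_union]
      refine SimpleGraph.Subgraph.connected_sup (connBlocks_connected hA hAne).preconnected (connBlocks_connected hB hBne).preconnected ?_
      obtain ⟨v, hv⟩ := B0.verts_nonempty
      refine ⟨v, ?_⟩
      rw [SimpleGraph.Subgraph.verts_inf]
      exact ⟨(le_blockUnion hB0.1).1 hv, (le_blockUnion hB0.2).1 hv⟩
    obtain ⟨w1, hw1⟩ := exists_walk_down ((𝓐 ∪ 𝓑) \ 𝓐).ncard (𝓐 ∪ 𝓑) hU 𝓐 hA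
      Set.subset_union_left rfl
    obtain ⟨w2, hw2⟩ := exists_walk_down ((𝓐 ∪ 𝓑) \ 𝓑).ncard (𝓐 ∪ 𝓑) hU 𝓑 hB
      Set.subset_union_right rfl
    refine ⟨w1.reverse.append w2, ?_⟩
    rw [SimpleGraph.Walk.length_append, SimpleGraph.Walk.length_reverse, hw1, hw2]
    have he1 : (𝓐 ∪ 𝓑) \ 𝓐 = 𝓑 \ 𝓐 := by
      ext z; simp only [Set.mem_diff, Set.mem_union]; tauto
    have he2 : (𝓐 ∪ 𝓑) \ 𝓑 = 𝓐 \ 𝓑 := by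
      ext z; simp only [Set.mem_diff, Set.mem_union]; tauto
    have hdisj : Disjoint (𝓑 \ 𝓐) (𝓐 \ 𝓑) := by
      rw [Set.disjoint_left]
      rintro z ⟨hz1, hz2⟩ ⟨hz3, hz4⟩
      exact hz2 hz3
    have := hcardbound _ _ hdisj
    rw [he1, he2]
    omega
  · -- disjoint families: go through the empty family
    obtain ⟨w1, hw1⟩ := exists_walk_down (𝓐 \ ∅).ncard 𝓐 hA ∅ connBlocks_empty
      (Set.empty_subset _) rfl
    obtain ⟨w2, hw2⟩ := exists_walk_down (𝓑 \ ∅).ncard 𝓑 hB ∅ connBlocks_empty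
      (Set.empty_subset _) rfl
    refine ⟨w1.append w2.reverse, ?_⟩
    rw [SimpleGraph.Walk.length_append, SimpleGraph.Walk.length_reverse, hw1, hw2]
    rw [Set.diff_empty, Set.diff_empty]
    have hdisj : Disjoint 𝓐 𝓑 := Set.disjoint_iff_inter_eq_empty.2
      (Set.not_nonempty_iff_eq_empty.1 hint)
    have := hcardbound _ _ hdisj
    omega


end ConnectedBlocksPaper
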